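/- Let S be a semigroup satisfying the identity x·y·z·x·y = x·y for all x, y, z ∈ S, and suppose that for all x, y, z ∈ S, x·y·y = x·y or z·z·x = z·x. If there exist a, b ∈ S with a·b·b ≠ a·b, then z·u·v·w = z·v·w for all z, u, v, w ∈ S. -/
import Mathlib


theorem stmt_12 {S : Type*} [Semigroup S]
    (hGRB : ∀ x y z : S, x * y * z * x * y = x * y)
    (h2 : ∀ x y z : S, x * y * y = x * y ∨ z * z * x = z * x)
    (h : ∃ a b : S, a * b * b ≠ a * b) :
    ∀ z u v w : S, z * u * v * w = z * v * w := by
  obtain ⟨a, b, hab⟩ := h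
  have sand : ∀ x y t : S, x * y * t * (x * y) = x * y := by
    intro x y t
    rw [← mul_assoc]
    exact hGRB x y t
  have LEM : ∀ z p q : S, z * z * (p * q) = z * (p * q) := by
    intro z p q
    rcases h2 (p * q * a) b z with hA2 | hR'
    · exfalso
      apply hab
      calc a * b * b
          = a * b * q * (a * b) * b := by rw [sand a b q]
        _ = (a * b) * ((q * a) * b * b) := by simp only [mul_assoc]
        _ = (a * b) * ((q * a) * b * p * ((q * a) * b) * b) := by
              rw [sand (q * a) b p]
        _ = ((a * b) * ((q * a) * b)) * (p * q * a * b * b) := by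
              simp only [mul_assoc]
        _ = ((a * b) * ((q * a) * b)) * (p * q * a * b) := by rw [hA2]
        _ = (a * b) * ((q * a) * b * p * ((q * a) * b)) := by
              simp only [mul_assoc]
        _ = (a * b) * ((q * a) * b) := by rw [sand (q * a) b p]
        _ = a * b * q * (a * b) := by simp only [mul_assoc]
        _ = a * b := sand a b q
    · calc z * z * (p * q)
          = z * z * (p * q * a * (p * q)) := by rw [sand p q a]
        _ = z * z * (p * q * a) * (p * q) := by
              rw [← mul_assoc (z * z) (p * q * a) (p * q)]
        _ = z * (p * q * a) * (p * q) := by rw [hR']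
        _ = z * (p * q * a * (p * q)) := by
              rw [mul_assoc z (p * q * a) (p * q)]
        _ = z * (p * q) := by rw [sand p q a]
  have idem : ∀ p q : S, (p * q) * (p * q) = p * q := by
    intro p q
    calc (p * q) * (p * q) = (p * q) * (p * q) * (p * q) :=
          (LEM (p * q) p q).symm
      _ = p * q := sand p q (p * q)
  have ptr : ∀ x y t c d : S, (x * y) * t * (c * d) = (x * y) * (c * d) := by
    intro x y t c d
    calc (x * y) * t * (c * d)
        = (x * y) * t * (c * d * (x * y) * (c * d)) := by rw [sand c d (x * y)]
      _ = (x * y) * (t * (c * d)) * (x * y) * (c * d) := by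
            simp only [mul_assoc]
      _ = (x * y) * (c * d) := by rw [sand x y (t * (c * d))]
  intro z u v w
  have hPQ : (u * (v * w)) * (v * w) = u * (v * w) := by
    rw [mul_assoc, idem v w]
  calc z * u * v * w
      = z * (u * (v * w)) := by simp only [mul_assoc]
    _ = z * z * (u * (v * w)) := (LEM z u (v * w)).symm
    _ = (z * z) * ((u * (v * w)) * (v * w)) := by rw [hPQ]
    _ = ((z * z) * (u * (v * w))) * (v * w) := by
          rw [← mul_assoc (z * z) (u * (v * w)) (v * w)]
    _ = (z * z) * (v * w) := ptr z z (u * (v * w)) v w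
    _ = z * (v * w) := LEM z v w
    _ = z * v * w := (mul_assoc z v w).symm
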